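/- Let (c₁,c₂) ∈ ℝ². If the polynomial D₂(c₁,c₂;·) has a complex root with real part equal to −1/2, then (45 + 12c₁ + c₁² − c₂)·(105/16 + (19/2)c₁ + c₂) = 0. -/

import Mathlib

noncomputable section

/-- The quartic polynomial `D₂(c₁,c₂;z) = z(z-1)(z-2)(z-3) + c₁[z(z-1)+(z-2)(z-3)] + c₂`. -/
def D2 (c₁ c₂ : ℝ) (z : ℂ) : ℂ :=
  z * (z - 1) * (z - 2) * (z - 3) + (c₁ : ℂ) * (z * (z - 1) + (z - 2) * (z - 3)) + (c₂ : ℂ)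

theorem stmt2 (c₁ c₂ : ℝ)
    (h : ∃ z : ℂ, D2 c₁ c₂ z = 0 ∧ z.re = -1/2) :
    (45 + 12 * c₁ + c₁ ^ 2 - c₂) * (105/16 + (19/2) * c₁ + c₂) = 0 := by
  obtain ⟨z, h0, hre⟩ := h
  set t := z.im with ht
  have hz : z = (↑(-1/2 : ℝ) : ℂ) + (t : ℂ) * Complex.I := by
    apply Complex.ext <;> simp [hre, ht]
  rw [hz] at h0
  unfold D2 at h0
  rw [Complex.ext_iff] at h0
  obtain ⟨h1, h2⟩ := h0
  simp only [Complex.add_re, Complex.add_im, Complex.mul_re, Complex.mul_im,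
    Complex.sub_re, Complex.sub_im, Complex.one_re, Complex.one_im,
    Complex.ofReal_re, Complex.ofReal_im, Complex.I_re, Complex.I_im,
    Complex.zero_re, Complex.zero_im, Complex.re_ofNat, Complex.im_ofNat] at h1 h2
  have e2 : t * (11/4 + c₁ - t^2) = 0 := by linear_combination (-1/8) * h2
  have e1 : t^4 - (43/2 + 2*c₁)*t^2 + 105/16 + 19/2*c₁ + c₂ = 0 := by linear_combination h1
  rcases mul_eq_zero.mp e2 with ht0 | hP
  · exact mul_eq_zero_of_right _ (by linear_combination e1 - (t^2 - (43/2+2*c₁))*t*ht0)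
  · exact mul_eq_zero_of_left (by nlinarith [hP, e1]) _
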